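/- arXiv:1302.0049 — 2 statements merged into one kernel-verified Lean document; each statement's English description precedes it below -/
import Mathlib

section
/- The group P = ⟨a, b ∣ a b² a⁻¹ b², b a² b⁻¹ a²⟩ (the Promislow/Passman group) is torsion-free. -/
/-- The relations of the Promislow group `P = ⟨a, b ∣ a b² a⁻¹ b², b a² b⁻¹ a²⟩`,
where `a` is `FreeGroup.of 0` and `b` is `FreeGroup.of 1`. -/
def promislowRels : Set (FreeGroup (Fin 2)) :=
  { FreeGroup.of 0 * (FreeGroup.of 1) ^ 2 * (FreeGroup.of 0)⁻¹ * (FreeGroup.of 1) ^ 2,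
    FreeGroup.of 1 * (FreeGroup.of 0) ^ 2 * (FreeGroup.of 1)⁻¹ * (FreeGroup.of 0) ^ 2 }

/-- The Promislow/Passman group. -/
abbrev PromislowGroup : Type := PresentedGroup promislowRels

/-- A monoid is torsion-free if no nontrivial element has finite order
(the definition of `Monoid.IsTorsionFree` in the older Mathlib, since removed). -/
def Monoid.IsTorsionFree (G : Type*) [Monoid G] : Prop :=
  ∀ g : G, g ≠ 1 → ¬IsOfFinOrder g

namespace Prom

section helpers
variable {G : Type*} [Group G] {g w u : G}

lemma conj_eq (h : g * w * g⁻¹ = u) : g * w = u * g := by rw [← h]; group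

lemma conjpow (h : g * w * g⁻¹ = u) (n : ℤ) : g * w ^ n * g⁻¹ = u ^ n := by
  rw [← h, conj_zpow]

lemma inv_conj_inv (h : g * w * g⁻¹ = w⁻¹) : g⁻¹ * w * g = w⁻¹ := by
  have h2 : g * w⁻¹ * g⁻¹ = w := by
    calc g * w⁻¹ * g⁻¹ = (g * w * g⁻¹)⁻¹ := by group
      _ = w := by rw [h, inv_inv]
  calc g⁻¹ * w * g = g⁻¹ * (g * w⁻¹ * g⁻¹) * g := by rw [h2]
    _ = w⁻¹ := by group

lemma inv_conj_id (h : g * w * g⁻¹ = w) : g⁻¹ * w * g = w := by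
  calc g⁻¹ * w * g = g⁻¹ * (g * w * g⁻¹) * g := by rw [h]
    _ = w := by group

lemma swap_pos (h : g⁻¹ * w * g = u) : w * g = g * u := by
  calc w * g = g * (g⁻¹ * w * g) := by group
    _ = g * u := by rw [h]

lemma swap_neg (h : g⁻¹ * w * g = u) : w⁻¹ * g = g * u⁻¹ := by
  calc w⁻¹ * g = g * (g⁻¹ * w * g)⁻¹ := by group
    _ = g * u⁻¹ := by rw [h]

lemma pow_push' (h : g⁻¹ * w * g = u) (n : ℤ) : w ^ n * g = g * u ^ n := by
  have h' : g⁻¹ * w * (g⁻¹)⁻¹ = u := by rw [inv_inv]; exact h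
  have h2 := conjpow h' n
  calc w ^ n * g = g * (g⁻¹ * w ^ n * (g⁻¹)⁻¹) := by group
    _ = g * u ^ n := by rw [h2]

end helpers

/-! generators and relations -/

def A : PromislowGroup := PresentedGroup.mk promislowRels (FreeGroup.of 0)
def B : PromislowGroup := PresentedGroup.mk promislowRels (FreeGroup.of 1)
def X : PromislowGroup := A * A
def Y : PromislowGroup := B * B
def Z : PromislowGroup := A * B * A * B

lemma defX : X = A * A := rfl
lemma defY : Y = B * B := rfl
lemma defZ : Z = A * B * A * B := rfl

lemma relmk {r : FreeGroup (Fin 2)} (hr : r ∈ promislowRels) :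
    PresentedGroup.mk promislowRels r = 1 :=
  (QuotientGroup.eq_one_iff r).mpr (Subgroup.subset_normalClosure hr)

lemma rel1 : A * B ^ 2 * A⁻¹ * B ^ 2 = 1 := by
  have h := relmk (Set.mem_insert _ _)
  simpa only [map_mul, map_pow, map_inv, A, B] using h

lemma rel2 : B * A ^ 2 * B⁻¹ * A ^ 2 = 1 := by
  have h := relmk (Set.mem_insert_of_mem _ rfl)
  simpa only [map_mul, map_pow, map_inv, A, B] using h

lemma rel1p : A * Y * A⁻¹ * Y = 1 := by
  have h := rel1; rw [pow_two, ← defY] at h; exact h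

lemma rel2p : B * X * B⁻¹ * X = 1 := by
  have h := rel2; rw [pow_two, ← defX] at h; exact h

lemma cAY : A * Y * A⁻¹ = Y⁻¹ := by
  calc A * Y * A⁻¹ = (A * Y * A⁻¹ * Y) * Y⁻¹ := by group
    _ = 1 * Y⁻¹ := by rw [rel1p]
    _ = Y⁻¹ := one_mul _

lemma cBX : B * X * B⁻¹ = X⁻¹ := by
  calc B * X * B⁻¹ = (B * X * B⁻¹ * X) * X⁻¹ := by group
    _ = 1 * X⁻¹ := by rw [rel2p]
    _ = X⁻¹ := one_mul _

lemma cAX : A * X * A⁻¹ = X := by rw [defX]; group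
lemma cBY : B * Y * B⁻¹ = Y := by rw [defY]; group

lemma e1 : Y * A⁻¹ * Y = A⁻¹ := by
  calc Y * A⁻¹ * Y = A⁻¹ * (A * Y * A⁻¹ * Y) := by group
    _ = A⁻¹ := by rw [rel1p, mul_one]

lemma cAXi : A⁻¹ * X * A = X := inv_conj_id cAX
lemma cBYi : B⁻¹ * Y * B = Y := inv_conj_id cBY
lemma cAYi : A⁻¹ * Y * A = Y⁻¹ := inv_conj_inv cAY
lemma cBXi : B⁻¹ * X * B = X⁻¹ := inv_conj_inv cBX

lemma h2' : B * X = X⁻¹ * B := conj_eq cBX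
lemma e2 : X * B = B * X⁻¹ := swap_pos cBXi

lemma cAZ : A * Z * A⁻¹ = Z⁻¹ := by
  rw [defZ]
  calc A * (A * B * A * B) * A⁻¹ = (X * B) * (A * B * A⁻¹) := by rw [defX]; group
    _ = (B * X⁻¹) * (A * B * A⁻¹) := by rw [e2]
    _ = B * A⁻¹ * B * A⁻¹ := by rw [defX]; group
    _ = B⁻¹ * (Y * A⁻¹ * Y) * B⁻¹ * A⁻¹ := by rw [defY]; group
    _ = B⁻¹ * A⁻¹ * B⁻¹ * A⁻¹ := by rw [e1]
    _ = (A * B * A * B)⁻¹ := by group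

lemma cBZ : B * Z * B⁻¹ = Z⁻¹ := by
  rw [defZ]
  calc B * (A * B * A * B) * B⁻¹ = B * A * (B * X) * (X⁻¹ * A) := by rw [defX]; group
    _ = B * A * (X⁻¹ * B) * (X⁻¹ * A) := by rw [h2']
    _ = B * A⁻¹ * B * A⁻¹ := by rw [defX]; group
    _ = B⁻¹ * (Y * A⁻¹ * Y) * B⁻¹ * A⁻¹ := by rw [defY]; group
    _ = B⁻¹ * A⁻¹ * B⁻¹ * A⁻¹ := by rw [e1]
    _ = (A * B * A * B)⁻¹ := by group

lemma cAZi : A⁻¹ * Z * A = Z⁻¹ := inv_conj_inv cAZ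
lemma cBZi : B⁻¹ * Z * B = Z⁻¹ := inv_conj_inv cBZ

/-! commutation of X, Y, Z -/

lemma cxy : Commute X Y := by
  refine conj_eq ?_
  calc X * Y * X⁻¹ = A * (A * Y * A⁻¹) * A⁻¹ := by rw [defX]; group
    _ = A * Y⁻¹ * A⁻¹ := by rw [cAY]
    _ = (A * Y * A⁻¹)⁻¹ := by group
    _ = Y := by rw [cAY, inv_inv]

lemma cxz : Commute X Z := by
  refine conj_eq ?_
  calc X * Z * X⁻¹ = A * (A * Z * A⁻¹) * A⁻¹ := by rw [defX]; group
    _ = A * Z⁻¹ * A⁻¹ := by rw [cAZ]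
    _ = (A * Z * A⁻¹)⁻¹ := by group
    _ = Z := by rw [cAZ, inv_inv]

lemma cyz : Commute Y Z := by
  refine conj_eq ?_
  calc Y * Z * Y⁻¹ = B * (B * Z * B⁻¹) * B⁻¹ := by rw [defY]; group
    _ = B * Z⁻¹ * B⁻¹ := by rw [cBZ]
    _ = (B * Z * B⁻¹)⁻¹ := by group
    _ = Z := by rw [cBZ, inv_inv]

lemma syx (m n : ℤ) : Y ^ m * X ^ n = X ^ n * Y ^ m := (cxy.symm.zpow_zpow m n).eq
lemma szx (m n : ℤ) : Z ^ m * X ^ n = X ^ n * Z ^ m := (cxz.symm.zpow_zpow m n).eq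
lemma szy (m n : ℤ) : Z ^ m * Y ^ n = Y ^ n * Z ^ m := (cyz.symm.zpow_zpow m n).eq

lemma merge (a b c d e f : ℤ) :
    (X ^ a * Y ^ b * Z ^ c) * (X ^ d * Y ^ e * Z ^ f)
      = X ^ (a + d) * Y ^ (b + e) * Z ^ (c + f) := by
  calc (X ^ a * Y ^ b * Z ^ c) * (X ^ d * Y ^ e * Z ^ f)
      = X ^ a * Y ^ b * (Z ^ c * X ^ d) * (Y ^ e * Z ^ f) := by group
    _ = X ^ a * Y ^ b * (X ^ d * Z ^ c) * (Y ^ e * Z ^ f) := by rw [szx]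
    _ = X ^ a * (Y ^ b * X ^ d) * ((Z ^ c * Y ^ e) * Z ^ f) := by group
    _ = X ^ a * (X ^ d * Y ^ b) * ((Y ^ e * Z ^ c) * Z ^ f) := by rw [syx, szy]
    _ = (X ^ a * X ^ d) * (Y ^ b * Y ^ e) * (Z ^ c * Z ^ f) := by group
    _ = X ^ (a + d) * Y ^ (b + e) * Z ^ (c + f) := by
        rw [← zpow_add, ← zpow_add, ← zpow_add]

end Prom
-- appended to p.lean inside namespace Prom
namespace Prom

/-! head lemmas : g * (et t) = (et t') * (X^a * Y^b * Z^c) -/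

-- g = A
lemma hd1 : A * 1 = A * (X ^ (0:ℤ) * Y ^ (0:ℤ) * Z ^ (0:ℤ)) := by group
lemma hd2 : A * A = 1 * (X ^ (1:ℤ) * Y ^ (0:ℤ) * Z ^ (0:ℤ)) := by
  calc A * A = X := defX.symm
    _ = 1 * (X ^ (1:ℤ) * Y ^ (0:ℤ) * Z ^ (0:ℤ)) := by group
lemma hd3 : A * B = (A * B) * (X ^ (0:ℤ) * Y ^ (0:ℤ) * Z ^ (0:ℤ)) := by group
lemma hd4 : A * (A * B) = B * (X ^ (-1:ℤ) * Y ^ (0:ℤ) * Z ^ (0:ℤ)) := by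
  calc A * (A * B) = (A * A) * B := by group
    _ = X * B := by rw [← defX]
    _ = B * X⁻¹ := e2
    _ = B * (X ^ (-1:ℤ) * Y ^ (0:ℤ) * Z ^ (0:ℤ)) := by group

-- g = A⁻¹
lemma hd5 : A⁻¹ * 1 = A * (X ^ (-1:ℤ) * Y ^ (0:ℤ) * Z ^ (0:ℤ)) := by
  calc A⁻¹ * 1 = A * (A * A)⁻¹ := by group
    _ = A * X⁻¹ := by rw [← defX]
    _ = A * (X ^ (-1:ℤ) * Y ^ (0:ℤ) * Z ^ (0:ℤ)) := by group
lemma hd6 : A⁻¹ * A = 1 * (X ^ (0:ℤ) * Y ^ (0:ℤ) * Z ^ (0:ℤ)) := by group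
lemma hd7 : A⁻¹ * B = (A * B) * (X ^ (1:ℤ) * Y ^ (0:ℤ) * Z ^ (0:ℤ)) := by
  calc A⁻¹ * B = (A * A)⁻¹ * (A * B) := by group
    _ = X⁻¹ * (A * B) := by rw [← defX]
    _ = (X⁻¹ * A) * B := by group
    _ = (A * X⁻¹) * B := by rw [swap_neg cAXi]
    _ = A * (X⁻¹ * B) := by group
    _ = A * (B * (X⁻¹)⁻¹) := by rw [swap_neg cBXi]
    _ = (A * B) * (X ^ (1:ℤ) * Y ^ (0:ℤ) * Z ^ (0:ℤ)) := by group
lemma hd8 : A⁻¹ * (A * B) = B * (X ^ (0:ℤ) * Y ^ (0:ℤ) * Z ^ (0:ℤ)) := by group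

-- g = B
lemma hd9 : B * 1 = B * (X ^ (0:ℤ) * Y ^ (0:ℤ) * Z ^ (0:ℤ)) := by group
lemma hd10 : B * A = (A * B) * (X ^ (1:ℤ) * Y ^ (-1:ℤ) * Z ^ (-1:ℤ)) := by
  calc B * A = (A * (A * A)⁻¹) * (A * B * A * B) * ((B * B)⁻¹ * B) := by group
    _ = (A * X⁻¹) * Z * (Y⁻¹ * B) := by rw [← defX, ← defY, ← defZ]
    _ = (A * X⁻¹) * Z * (B * Y⁻¹) := by rw [swap_neg cBYi]
    _ = (A * X⁻¹) * (Z * B) * Y⁻¹ := by group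
    _ = (A * X⁻¹) * (B * Z⁻¹) * Y⁻¹ := by rw [swap_pos cBZi]
    _ = A * (X⁻¹ * B) * (Z⁻¹ * Y⁻¹) := by group
    _ = A * (B * (X⁻¹)⁻¹) * (Z⁻¹ * Y⁻¹) := by rw [swap_neg cBXi]
    _ = (A * B) * (X ^ (1:ℤ) * (Z ^ (-1:ℤ) * Y ^ (-1:ℤ))) := by group
    _ = (A * B) * (X ^ (1:ℤ) * (Y ^ (-1:ℤ) * Z ^ (-1:ℤ))) := by rw [szy]
    _ = (A * B) * (X ^ (1:ℤ) * Y ^ (-1:ℤ) * Z ^ (-1:ℤ)) := by group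
lemma hd11 : B * B = 1 * (X ^ (0:ℤ) * Y ^ (1:ℤ) * Z ^ (0:ℤ)) := by
  calc B * B = Y := defY.symm
    _ = 1 * (X ^ (0:ℤ) * Y ^ (1:ℤ) * Z ^ (0:ℤ)) := by group
lemma hd12 : B * (A * B) = A * (X ^ (-1:ℤ) * Y ^ (0:ℤ) * Z ^ (1:ℤ)) := by
  calc B * (A * B) = (A * (A * A)⁻¹) * (A * B * A * B) := by group
    _ = (A * X⁻¹) * Z := by rw [← defX, ← defZ]
    _ = A * (X ^ (-1:ℤ) * Y ^ (0:ℤ) * Z ^ (1:ℤ)) := by group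

-- g = B⁻¹
lemma hd13 : B⁻¹ * 1 = B * (X ^ (0:ℤ) * Y ^ (-1:ℤ) * Z ^ (0:ℤ)) := by
  calc B⁻¹ * 1 = B * (B * B)⁻¹ := by group
    _ = B * Y⁻¹ := by rw [← defY]
    _ = B * (X ^ (0:ℤ) * Y ^ (-1:ℤ) * Z ^ (0:ℤ)) := by group
lemma hd14 : B⁻¹ * A = (A * B) * (X ^ (1:ℤ) * Y ^ (0:ℤ) * Z ^ (-1:ℤ)) := by
  calc B⁻¹ * A = (B * B)⁻¹ * (B * A) := by group
    _ = Y⁻¹ * (B * A) := by rw [← defY]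
    _ = Y⁻¹ * ((A * B) * (X ^ (1:ℤ) * Y ^ (-1:ℤ) * Z ^ (-1:ℤ))) := by rw [hd10]
    _ = (Y⁻¹ * A) * (B * (X ^ (1:ℤ) * Y ^ (-1:ℤ) * Z ^ (-1:ℤ))) := by group
    _ = (A * Y⁻¹⁻¹) * (B * (X ^ (1:ℤ) * Y ^ (-1:ℤ) * Z ^ (-1:ℤ))) := by rw [swap_neg cAYi]
    _ = A * ((Y * B) * (X ^ (1:ℤ) * Y ^ (-1:ℤ) * Z ^ (-1:ℤ))) := by group
    _ = A * ((B * Y) * (X ^ (1:ℤ) * Y ^ (-1:ℤ) * Z ^ (-1:ℤ))) := by rw [swap_pos cBYi]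
    _ = (A * B) * (Y ^ (1:ℤ) * X ^ (1:ℤ) * (Y ^ (-1:ℤ) * Z ^ (-1:ℤ))) := by group
    _ = (A * B) * (X ^ (1:ℤ) * Y ^ (1:ℤ) * (Y ^ (-1:ℤ) * Z ^ (-1:ℤ))) := by rw [syx]
    _ = (A * B) * (X ^ (1:ℤ) * Y ^ (0:ℤ) * Z ^ (-1:ℤ)) := by group
lemma hd15 : B⁻¹ * B = 1 * (X ^ (0:ℤ) * Y ^ (0:ℤ) * Z ^ (0:ℤ)) := by group
lemma hd16 : B⁻¹ * (A * B) = A * (X ^ (-1:ℤ) * Y ^ (1:ℤ) * Z ^ (1:ℤ)) := by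
  calc B⁻¹ * (A * B) = (B⁻¹ * A) * B := by group
    _ = ((A * B) * (X ^ (1:ℤ) * Y ^ (0:ℤ) * Z ^ (-1:ℤ))) * B := by rw [hd14]
    _ = (A * B) * (X ^ (1:ℤ) * (Y ^ (0:ℤ) * (Z ^ (-1:ℤ) * B))) := by group
    _ = (A * B) * (X ^ (1:ℤ) * (Y ^ (0:ℤ) * (B * (Z⁻¹) ^ (-1:ℤ)))) := by
        rw [pow_push' cBZi]
    _ = (A * B) * (X ^ (1:ℤ) * ((Y ^ (0:ℤ) * B) * (Z⁻¹) ^ (-1:ℤ))) := by group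
    _ = (A * B) * (X ^ (1:ℤ) * ((B * Y ^ (0:ℤ)) * (Z⁻¹) ^ (-1:ℤ))) := by
        rw [pow_push' cBYi]
    _ = (A * B) * ((X ^ (1:ℤ) * B) * (Y ^ (0:ℤ) * (Z⁻¹) ^ (-1:ℤ))) := by group
    _ = (A * B) * ((B * (X⁻¹) ^ (1:ℤ)) * (Y ^ (0:ℤ) * (Z⁻¹) ^ (-1:ℤ))) := by
        rw [pow_push' cBXi]
    _ = A * ((B * B) * (X ^ (-1:ℤ) * (Y ^ (0:ℤ) * Z ^ (1:ℤ)))) := by group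
    _ = A * (Y * (X ^ (-1:ℤ) * (Y ^ (0:ℤ) * Z ^ (1:ℤ)))) := by rw [← defY]
    _ = A * ((Y ^ (1:ℤ) * X ^ (-1:ℤ)) * (Y ^ (0:ℤ) * Z ^ (1:ℤ))) := by group
    _ = A * ((X ^ (-1:ℤ) * Y ^ (1:ℤ)) * (Y ^ (0:ℤ) * Z ^ (1:ℤ))) := by rw [syx]
    _ = A * (X ^ (-1:ℤ) * Y ^ (1:ℤ) * Z ^ (1:ℤ)) := by group

end Prom
namespace Prom

def et : Bool × Bool → PromislowGroup
  | (false, false) => 1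
  | (true, false) => A
  | (false, true) => B
  | (true, true) => A * B

def nf (i j k : ℤ) (t : Bool × Bool) : PromislowGroup :=
  et t * (X ^ i * Y ^ j * Z ^ k)

lemma mul_nf {g e e' : PromislowGroup} {a b c : ℤ} (hd : g * e = e' * (X ^ a * Y ^ b * Z ^ c))
    (i j k : ℤ) : g * (e * (X ^ i * Y ^ j * Z ^ k)) = e' * (X ^ (a + i) * Y ^ (b + j) * Z ^ (c + k)) := by
  calc g * (e * (X ^ i * Y ^ j * Z ^ k)) = (g * e) * (X ^ i * Y ^ j * Z ^ k) := by group
    _ = (e' * (X ^ a * Y ^ b * Z ^ c)) * (X ^ i * Y ^ j * Z ^ k) := by rw [hd]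
    _ = e' * ((X ^ a * Y ^ b * Z ^ c) * (X ^ i * Y ^ j * Z ^ k)) := by group
    _ = e' * (X ^ (a + i) * Y ^ (b + j) * Z ^ (c + k)) := by rw [merge]

lemma stepA (i j k : ℤ) (t : Bool × Bool) :
    ∃ i' j' k' t', A * nf i j k t = nf i' j' k' t' := by
  obtain ⟨t1, t2⟩ := t
  cases t1 <;> cases t2 <;> simp only [nf, et]
  · exact ⟨0 + i, 0 + j, 0 + k, (true, false), mul_nf hd1 i j k⟩
  · exact ⟨0 + i, 0 + j, 0 + k, (true, true), mul_nf hd3 i j k⟩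
  · exact ⟨1 + i, 0 + j, 0 + k, (false, false), mul_nf hd2 i j k⟩
  · exact ⟨-1 + i, 0 + j, 0 + k, (false, true), mul_nf hd4 i j k⟩

lemma stepAi (i j k : ℤ) (t : Bool × Bool) :
    ∃ i' j' k' t', A⁻¹ * nf i j k t = nf i' j' k' t' := by
  obtain ⟨t1, t2⟩ := t
  cases t1 <;> cases t2 <;> simp only [nf, et]
  · exact ⟨-1 + i, 0 + j, 0 + k, (true, false), mul_nf hd5 i j k⟩
  · exact ⟨1 + i, 0 + j, 0 + k, (true, true), mul_nf hd7 i j k⟩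
  · exact ⟨0 + i, 0 + j, 0 + k, (false, false), mul_nf hd6 i j k⟩
  · exact ⟨0 + i, 0 + j, 0 + k, (false, true), mul_nf hd8 i j k⟩

lemma stepB (i j k : ℤ) (t : Bool × Bool) :
    ∃ i' j' k' t', B * nf i j k t = nf i' j' k' t' := by
  obtain ⟨t1, t2⟩ := t
  cases t1 <;> cases t2 <;> simp only [nf, et]
  · exact ⟨0 + i, 0 + j, 0 + k, (false, true), mul_nf hd9 i j k⟩
  · exact ⟨0 + i, 1 + j, 0 + k, (false, false), mul_nf hd11 i j k⟩
  · exact ⟨1 + i, -1 + j, -1 + k, (true, true), mul_nf hd10 i j k⟩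
  · exact ⟨-1 + i, 0 + j, 1 + k, (true, false), mul_nf hd12 i j k⟩

lemma stepBi (i j k : ℤ) (t : Bool × Bool) :
    ∃ i' j' k' t', B⁻¹ * nf i j k t = nf i' j' k' t' := by
  obtain ⟨t1, t2⟩ := t
  cases t1 <;> cases t2 <;> simp only [nf, et]
  · exact ⟨0 + i, -1 + j, 0 + k, (false, true), mul_nf hd13 i j k⟩
  · exact ⟨0 + i, 0 + j, 0 + k, (false, false), mul_nf hd15 i j k⟩
  · exact ⟨1 + i, 0 + j, -1 + k, (true, true), mul_nf hd14 i j k⟩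
  · exact ⟨-1 + i, 1 + j, 1 + k, (true, false), mul_nf hd16 i j k⟩

lemma nf_zero : nf 0 0 0 (false, false) = 1 := by
  simp only [nf, et]; group

lemma nf_exists (p : PromislowGroup) : ∃ i j k t, p = nf i j k t := by
  refine PresentedGroup.induction_on (C := fun q => ∃ i j k t, q = nf i j k t) p ?_
  intro z
  suffices h : ∀ i j k t, ∃ i' j' k' t',
      PresentedGroup.mk promislowRels z * nf i j k t = nf i' j' k' t' by
    obtain ⟨i, j, k, t, hh⟩ := h 0 0 0 (false, false)
    refine ⟨i, j, k, t, ?_⟩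
    rw [nf_zero, mul_one] at hh
    exact hh
  induction z using FreeGroup.induction_on with
  | C1 => intro i j k t; exact ⟨i, j, k, t, by rw [map_one, one_mul]⟩
  | of x =>
      intro i j k t
      fin_cases x
      · exact stepA i j k t
      · exact stepB i j k t
  | inv_of x _ =>
      intro i j k t
      fin_cases x
      · rw [map_inv]; exact stepAi i j k t
      · rw [map_inv]; exact stepBi i j k t
  | mul x y hx hy =>
      intro i j k t
      obtain ⟨i1, j1, k1, t1, h1⟩ := hy i j k t
      obtain ⟨i2, j2, k2, t2, h2⟩ := hx i1 j1 k1 t1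
      exact ⟨i2, j2, k2, t2, by rw [map_mul, mul_assoc, h1, h2]⟩

end Prom
namespace Prom

def rho (s : Bool × Bool) (v : ℤ × ℤ × ℤ) : ℤ × ℤ × ℤ :=
  ((if s.2 then -v.1 else v.1), (if s.1 then -v.2.1 else v.2.1),
    (if xor s.1 s.2 then -v.2.2 else v.2.2))

lemma rho_ff (v : ℤ × ℤ × ℤ) : rho (false, false) v = v := by simp [rho]

lemma rho_rho (s t : Bool × Bool) (v : ℤ × ℤ × ℤ) :
    rho s (rho t v) = rho (xor s.1 t.1, xor s.2 t.2) v := by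
  obtain ⟨s1, s2⟩ := s; obtain ⟨t1, t2⟩ := t
  cases s1 <;> cases s2 <;> cases t1 <;> cases t2 <;> simp [rho]

lemma rho_add (s : Bool × Bool) (v w : ℤ × ℤ × ℤ) :
    rho s (v + w) = rho s v + rho s w := by
  obtain ⟨s1, s2⟩ := s
  cases s1 <;> cases s2 <;> simp [rho, Prod.ext_iff, neg_add, add_comm]

lemma rho_neg (s : Bool × Bool) (v : ℤ × ℤ × ℤ) : rho s (-v) = -(rho s v) := by
  obtain ⟨s1, s2⟩ := s
  cases s1 <;> cases s2 <;> simp [rho, Prod.ext_iff]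

def Gc : Type := (ℤ × ℤ × ℤ) × (Bool × Bool)

namespace Gc

/-- constructor -/
def mk' (v : ℤ × ℤ × ℤ) (s : Bool × Bool) : Gc := (v, s)

instance : One Gc := ⟨mk' (0, 0, 0) (false, false)⟩
instance : Mul Gc :=
  ⟨fun g h => mk' (g.1 + rho g.2 h.1) (xor g.2.1 h.2.1, xor g.2.2 h.2.2)⟩
instance : Inv Gc := ⟨fun g => mk' (-(rho g.2 g.1)) g.2⟩

lemma mul_def (v w : ℤ × ℤ × ℤ) (s t : Bool × Bool) :
    mk' v s * mk' w t = mk' (v + rho s w) (xor s.1 t.1, xor s.2 t.2) := rfl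
lemma one_def : (1 : Gc) = mk' (0, 0, 0) (false, false) := rfl
lemma inv_def (v : ℤ × ℤ × ℤ) (s : Bool × Bool) : (mk' v s)⁻¹ = mk' (-(rho s v)) s := rfl

lemma mk'_inj {v w : ℤ × ℤ × ℤ} {s t : Bool × Bool} :
    mk' v s = mk' w t ↔ v = w ∧ s = t := by
  unfold mk'; exact Prod.mk.injEq v s w t ▸ Iff.rfl

instance : Group Gc where
  mul_assoc a b c := by
    obtain ⟨va, sa⟩ := a; obtain ⟨vb, sb⟩ := b; obtain ⟨vc, sc⟩ := c
    show mk' va sa * mk' vb sb * mk' vc sc = mk' va sa * (mk' vb sb * mk' vc sc)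
    simp [mul_def, rho_add, rho_rho, add_assoc, Bool.xor_assoc]
  one_mul a := by
    obtain ⟨v, s⟩ := a
    show (1 : Gc) * mk' v s = mk' v s
    simp [mul_def, one_def, rho_ff, Prod.mk_zero_zero]
  mul_one a := by
    obtain ⟨v, s1, s2⟩ := a
    show mk' v (s1, s2) * 1 = mk' v (s1, s2)
    cases s1 <;> cases s2 <;> simp [mul_def, one_def, rho, Prod.mk_zero_zero]
  inv_mul_cancel a := by
    obtain ⟨v, s⟩ := a
    show (mk' v s)⁻¹ * mk' v s = 1
    obtain ⟨s1, s2⟩ := s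
    simp [mul_def, inv_def, one_def, rho_rho, rho_neg, Prod.mk_zero_zero]

lemma trans_pow (v : ℤ × ℤ × ℤ) (n : ℕ) :
    (mk' v (false, false)) ^ n = mk' (n • v) (false, false) := by
  induction n with
  | zero => rw [pow_zero, one_def, zero_smul]; rfl
  | succ n ih =>
      rw [pow_succ, ih, mul_def, rho_ff]
      congr 1
      rw [add_smul, one_smul]

lemma trans_zpow (v : ℤ × ℤ × ℤ) (n : ℤ) :
    (mk' v (false, false)) ^ n = mk' (n • v) (false, false) := by
  cases n with
  | ofNat n => rw [Int.ofNat_eq_coe, zpow_natCast, trans_pow, natCast_zsmul]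
  | negSucc n =>
      rw [zpow_negSucc, trans_pow, inv_def, rho_ff]
      congr 1
      rw [Int.negSucc_eq, neg_smul]
      simp [add_smul, natCast_zsmul]

end Gc
end Prom
namespace Prom

instance : DecidableEq Gc := by unfold Gc; exact inferInstance

def ga : Gc := Gc.mk' (1, 0, 0) (true, false)
def gb : Gc := Gc.mk' (0, 1, 1) (false, true)
def gx : Gc := Gc.mk' (2, 0, 0) (false, false)
def gy : Gc := Gc.mk' (0, 2, 0) (false, false)
def gz : Gc := Gc.mk' (0, 0, -2) (false, false)

def fa : Fin 2 → Gc := fun x => if x = 0 then ga else gb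

lemma frels : ∀ r ∈ promislowRels, FreeGroup.lift fa r = 1 := by
  intro r hr
  simp only [promislowRels, Set.mem_insert_iff, Set.mem_singleton_iff] at hr
  rcases hr with rfl | rfl <;>
    · simp only [map_mul, map_pow, map_inv, FreeGroup.lift_apply_of, fa]
      decide

def phi : PromislowGroup →* Gc := PresentedGroup.toGroup frels

lemma phiA : phi A = ga := by
  show PresentedGroup.toGroup frels (PresentedGroup.of 0) = ga
  rw [PresentedGroup.toGroup.of]
  simp [fa]

lemma phiB : phi B = gb := by
  show PresentedGroup.toGroup frels (PresentedGroup.of 1) = gb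
  rw [PresentedGroup.toGroup.of]
  simp [fa]

lemma phiX : phi X = gx := by rw [defX, map_mul, phiA]; decide
lemma phiY : phi Y = gy := by rw [defY, map_mul, phiB]; decide
lemma phiZ : phi Z = gz := by
  rw [defZ, map_mul, map_mul, map_mul, phiA, phiB]; decide

lemma trans_mul (v w : ℤ × ℤ × ℤ) :
    Gc.mk' v (false, false) * Gc.mk' w (false, false) = Gc.mk' (v + w) (false, false) := by
  simp [Gc.mul_def, rho_ff]

lemma phi_pows (i j k : ℤ) :
    phi (X ^ i * Y ^ j * Z ^ k) = Gc.mk' (2 * i, 2 * j, -2 * k) (false, false) := by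
  rw [map_mul, map_mul, map_zpow, map_zpow, map_zpow, phiX, phiY, phiZ]
  rw [show gx = Gc.mk' (2, 0, 0) (false, false) from rfl,
      show gy = Gc.mk' (0, 2, 0) (false, false) from rfl,
      show gz = Gc.mk' (0, 0, -2) (false, false) from rfl,
      Gc.trans_zpow, Gc.trans_zpow, Gc.trans_zpow, trans_mul, trans_mul]
  congr 1
  simp [Prod.ext_iff, smul_eq_mul]
  omega

def ge : Bool × Bool → Gc
  | (false, false) => 1
  | (true, false) => ga
  | (false, true) => gb
  | (true, true) => ga * gb

lemma phi_et (t : Bool × Bool) : phi (et t) = ge t := by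
  obtain ⟨t1, t2⟩ := t
  cases t1 <;> cases t2 <;> simp [et, ge, map_one, map_mul, phiA, phiB]

lemma phi_nf (i j k : ℤ) (t : Bool × Bool) :
    phi (nf i j k t) = ge t * Gc.mk' (2 * i, 2 * j, -2 * k) (false, false) := by
  simp only [nf, map_mul, phi_et]
  rw [← map_mul, ← map_mul, phi_pows]

end Prom
namespace Prom

lemma Gc.sq (v : ℤ × ℤ × ℤ) (s : Bool × Bool) :
    (Gc.mk' v s) ^ 2 = Gc.mk' (v + rho s v) (false, false) := by
  rw [pow_two, Gc.mul_def]
  congr 1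
  simp

lemma Gc.mul_trans (v w : ℤ × ℤ × ℤ) (s : Bool × Bool) :
    Gc.mk' v s * Gc.mk' w (false, false) = Gc.mk' (v + rho s w) s := by
  rw [Gc.mul_def]
  congr 1
  simp

lemma sq_phi (i j k : ℤ) (t : Bool × Bool) (h1 : nf i j k t ≠ 1) :
    ∃ u : ℤ × ℤ × ℤ, u ≠ 0 ∧ (phi (nf i j k t)) ^ 2 = Gc.mk' u (false, false) := by
  obtain ⟨t1, t2⟩ := t
  cases t1 <;> cases t2
  · -- t = (false, false)
    by_cases hijk : i = 0 ∧ j = 0 ∧ k = 0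
    · exact absurd (by obtain ⟨rfl, rfl, rfl⟩ := hijk; exact nf_zero) h1
    · refine ⟨(4 * i, 4 * j, -4 * k), ?_, ?_⟩
      · intro h0
        simp [Prod.ext_iff] at h0
        exact hijk ⟨by omega, by omega, by omega⟩
      · rw [phi_nf, show ge (false, false) = Gc.mk' (0,0,0) (false,false) from rfl,
            Gc.mul_trans, Gc.sq]
        congr 1
        simp [rho, Prod.ext_iff]
        omega
  · -- t = (false, true) : B head
    refine ⟨(0, 2 * (1 + 2 * j), 0), ?_, ?_⟩
    · intro h0
      simp [Prod.ext_iff] at h0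
      omega
    · rw [phi_nf, show ge (false, true) = Gc.mk' (0,1,1) (false,true) from rfl,
          Gc.mul_trans, Gc.sq]
      congr 1
      simp [rho, Prod.ext_iff]
      omega
  · -- t = (true, false) : A head
    refine ⟨(2 * (1 + 2 * i), 0, 0), ?_, ?_⟩
    · intro h0
      simp [Prod.ext_iff] at h0
      omega
    · rw [phi_nf, show ge (true, false) = Gc.mk' (1,0,0) (true,false) from rfl,
          Gc.mul_trans, Gc.sq]
      congr 1
      simp [rho, Prod.ext_iff]
      omega
  · -- t = (true, true) : AB head
    refine ⟨(0, 0, 2 * (-1 - 2 * k)), ?_, ?_⟩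
    · intro h0
      simp [Prod.ext_iff] at h0
      omega
    · rw [phi_nf, show ge (true, true) = Gc.mk' (1,-1,-1) (true,true) from by decide,
          Gc.mul_trans, Gc.sq]
      congr 1
      simp [rho, Prod.ext_iff]
      omega

end Prom

/-- The Promislow group `P = ⟨a, b ∣ a b² a⁻¹ b², b a² b⁻¹ a²⟩` is torsion-free. -/
theorem promislowGroup_isTorsionFree : Monoid.IsTorsionFree PromislowGroup := by
  intro p hp hfin
  obtain ⟨n, hn, hpn⟩ := isOfFinOrder_iff_pow_eq_one.mp hfin
  obtain ⟨i, j, k, t, rfl⟩ := Prom.nf_exists p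
  obtain ⟨u, hu, hsq⟩ := Prom.sq_phi i j k t hp
  have hφn : (Prom.phi (Prom.nf i j k t)) ^ n = 1 := by
    rw [← map_pow, hpn, map_one]
  have h2 : (Prom.Gc.mk' u (false, false)) ^ n = 1 := by
    rw [← hsq, pow_right_comm, hφn, one_pow]
  rw [Prom.Gc.trans_pow, Prom.Gc.one_def] at h2
  have h0 : n • u = (0 : ℤ × ℤ × ℤ) := (Prom.Gc.mk'_inj.mp h2).1
  have h0' : (n : ℤ) • u = 0 := by rwa [natCast_zsmul]
  rcases smul_eq_zero.mp h0' with h | h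
  · exact hn.ne' (by exact_mod_cast h)
  · exact hu h
end

section
/- In the Promislow group P = ⟨a, b ∣ a b² a⁻¹ b², b a² b⁻¹ a²⟩, the elements a² and b² commute, and in fact ⟨a², b²⟩ is a subgroup isomorphic to ℤ². -/
/-- The generator `a` of the Promislow group. -/
def pa : PromislowGroup := PresentedGroup.of 0

/-- The generator `b` of the Promislow group. -/
def pb : PromislowGroup := PresentedGroup.of 1

namespace PromislowAux

open DihedralGroup

lemma mk_rel_one : ∀ r ∈ promislowRels, PresentedGroup.mk promislowRels r = 1 := fun r hr =>
  (QuotientGroup.eq_one_iff r).mpr (Subgroup.subset_normalClosure hr)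

lemma rel1 : pa * pb ^ 2 * pa⁻¹ * pb ^ 2 = 1 := by
  have h := mk_rel_one _ (Set.mem_insert _ _)
  simpa [pa, pb, PresentedGroup.of, map_mul, map_pow, map_inv] using h

lemma hc : pa * pb ^ 2 * pa⁻¹ = (pb ^ 2)⁻¹ :=
  eq_inv_of_mul_eq_one_left rel1

lemma comm_sq : Commute (pa ^ 2) (pb ^ 2) := by
  have key : pa ^ 2 * pb ^ 2 * (pa ^ 2)⁻¹ = pb ^ 2 := by
    calc pa ^ 2 * pb ^ 2 * (pa ^ 2)⁻¹
        = pa * (pa * pb ^ 2 * pa⁻¹) * pa⁻¹ := by group; rw [zpow_two]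
      _ = pa * (pb ^ 2)⁻¹ * pa⁻¹ := by rw [hc]
      _ = (pa * pb ^ 2 * pa⁻¹)⁻¹ := by group
      _ = pb ^ 2 := by rw [hc, inv_inv]
  exact mul_inv_eq_iff_eq_mul.mp key

/-- The rotations form a copy of `ℤ` inside `DihedralGroup 0`. -/
def rHom : Multiplicative ℤ →* DihedralGroup 0 where
  toFun k := DihedralGroup.r (Multiplicative.toAdd k)
  map_one' := rfl
  map_mul' _ _ := (r_mul_r _ _).symm

lemma r_one_zpow (k : ℤ) : (r (1 : ZMod 0)) ^ k = rHom (Multiplicative.ofAdd k) := by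
  rw [show (r (1 : ZMod 0)) = rHom (Multiplicative.ofAdd (1 : ℤ)) from rfl, ← map_zpow]
  rw [← ofAdd_zsmul, smul_eq_mul, mul_one]

lemma r_injective : Function.Injective (r : ZMod 0 → DihedralGroup 0) := by
  intro i j h
  cases h
  rfl

lemma sr_inv (i : ZMod 0) : (sr i)⁻¹ = sr i :=
  inv_eq_of_mul_eq_one_right (sr_mul_self i)

def f1 : Fin 2 → DihedralGroup 0 := ![r 1, sr 0]

def f2 : Fin 2 → DihedralGroup 0 := ![sr 0, r 1]

lemma hf1 : ∀ w ∈ promislowRels, FreeGroup.lift f1 w = 1 := by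
  intro w hw
  simp only [promislowRels, Set.mem_insert_iff, Set.mem_singleton_iff] at hw
  rcases hw with rfl | rfl <;>
    simp [f1, map_mul, map_pow, map_inv, sq, sr_inv, one_def, -r_zero] <;> rfl

lemma hf2 : ∀ w ∈ promislowRels, FreeGroup.lift f2 w = 1 := by
  intro w hw
  simp only [promislowRels, Set.mem_insert_iff, Set.mem_singleton_iff] at hw
  rcases hw with rfl | rfl <;>
    simp [f2, map_mul, map_pow, map_inv, sq, sr_inv, one_def, -r_zero] <;> rfl

def π1 : PromislowGroup →* DihedralGroup 0 := PresentedGroup.toGroup hf1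

def π2 : PromislowGroup →* DihedralGroup 0 := PresentedGroup.toGroup hf2

lemma π1_pa : π1 pa = r 1 := by simp [π1, pa, f1]
lemma π1_pb : π1 pb = sr 0 := by simp [π1, pb, f1]
lemma π2_pa : π2 pa = sr 0 := by simp [π2, pa, f2]
lemma π2_pb : π2 pb = r 1 := by simp [π2, pb, f2]

/-- The homomorphism `ℤ² → P`, `(m, n) ↦ (a²)^m (b²)^n`. -/
def φ : Multiplicative (ℤ × ℤ) →* PromislowGroup :=
  ((zpowersHom _ (pa ^ 2)).noncommCoprod (zpowersHom _ (pb ^ 2))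
      (fun m n => comm_sq.zpow_zpow (Multiplicative.toAdd m) (Multiplicative.toAdd n))).comp
    (MulEquiv.prodMultiplicative (G := ℤ) (H := ℤ)).toMonoidHom

lemma φ_apply (q : ℤ × ℤ) :
    φ (Multiplicative.ofAdd q) = (pa ^ 2) ^ q.1 * (pb ^ 2) ^ q.2 := by
  simp [φ, MonoidHom.noncommCoprod_apply, zpowersHom_apply]
  rfl

lemma sr_sq_zpow (n : ℤ) : ((sr (0 : ZMod 0)) ^ 2) ^ n = 1 := by
  rw [sq, sr_mul_sr, sub_self, ← one_def, one_zpow]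

lemma r_sq_zpow_eq_one {m : ℤ} (h : ((r (1 : ZMod 0)) ^ 2) ^ m = 1) : m = 0 := by
  rw [← zpow_natCast (r (1 : ZMod 0)) 2, ← zpow_mul, r_one_zpow] at h
  have h2 : Multiplicative.ofAdd ((2 : ℕ) * m) = (1 : Multiplicative ℤ) := by
    have := r_injective (h.trans one_def)
    exact congrArg Multiplicative.ofAdd this
  have h3 : ((2 : ℕ) : ℤ) * m = 0 := by exact_mod_cast congrArg Multiplicative.toAdd h2
  omega

lemma φ_injective : Function.Injective φ := by
  rw [injective_iff_map_eq_one]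
  intro p hp
  rw [← ofAdd_toAdd p, φ_apply] at hp
  set m := (Multiplicative.toAdd p).1 with hmdef
  set n := (Multiplicative.toAdd p).2 with hndef
  have hm : m = 0 := by
    have h1 : π1 ((pa ^ 2) ^ m * (pb ^ 2) ^ n) = 1 := by rw [hp, map_one]
    rw [map_mul, map_zpow, map_zpow, map_pow, map_pow, π1_pa, π1_pb,
      sr_sq_zpow, mul_one] at h1
    exact r_sq_zpow_eq_one h1
  have hn : n = 0 := by
    have h1 : π2 ((pa ^ 2) ^ m * (pb ^ 2) ^ n) = 1 := by rw [hp, map_one]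
    rw [map_mul, map_zpow, map_zpow, map_pow, map_pow, π2_pa, π2_pb,
      sr_sq_zpow, one_mul] at h1
    exact r_sq_zpow_eq_one h1
  have htp : Multiplicative.toAdd p = 0 := Prod.ext hm hn
  rw [← ofAdd_toAdd p, htp]
  rfl

lemma range_φ : φ.range = Subgroup.closure {pa ^ 2, pb ^ 2} := by
  apply le_antisymm
  · rintro x ⟨p, rfl⟩
    rw [← ofAdd_toAdd p, φ_apply]
    have ha : pa ^ 2 ∈ Subgroup.closure {pa ^ 2, pb ^ 2} :=
      Subgroup.subset_closure (Set.mem_insert _ _)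
    have hb : pb ^ 2 ∈ Subgroup.closure {pa ^ 2, pb ^ 2} :=
      Subgroup.subset_closure (Set.mem_insert_iff.mpr (Or.inr rfl))
    exact mul_mem (zpow_mem ha _) (zpow_mem hb _)
  · rw [Subgroup.closure_le]
    rintro x hx
    simp only [Set.mem_insert_iff, Set.mem_singleton_iff] at hx
    rcases hx with rfl | rfl
    · exact ⟨Multiplicative.ofAdd (1, 0), by rw [φ_apply]; simp⟩
    · exact ⟨Multiplicative.ofAdd (0, 1), by rw [φ_apply]; simp⟩

end PromislowAux

/-- In the Promislow group, `a²` and `b²` commute, and the subgroup they generate is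
isomorphic to `ℤ²`. -/
theorem promislow_sq_commute_and_closure_iso_Z2 :
    Commute (pa ^ 2) (pb ^ 2) ∧
      Nonempty ((Subgroup.closure {pa ^ 2, pb ^ 2} : Subgroup PromislowGroup) ≃*
        Multiplicative (ℤ × ℤ)) := by
  refine ⟨PromislowAux.comm_sq, ⟨?_⟩⟩
  exact ((MonoidHom.ofInjective PromislowAux.φ_injective).trans
    (MulEquiv.subgroupCongr PromislowAux.range_φ)).symm
end
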